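/- Under the same setup (k ≥ 1 fixed, f > 0, g_k(h;p) = p^(k-h) f(h)/Z_k(p)), the derivative with respect to p of the subjective mean E_{g_k(·;p)}[H] = ∑_{h=0}^{k-1} h·g_k(h;p) equals −(1/p)·Var_{g_k(·;p)}(H), where Var_{g_k}(H) = ∑_h h² g_k(h;p) − (∑_h h g_k(h;p))². -/

import Mathlib

/-- strategic sensitivity. The derivative of the subjective mean
in `p` equals minus the belief variance divided by `p`. -/
theorem strategic_sensitivity
    (f : ℕ → ℝ) (hf : ∀ n, 0 < f n) (k : ℕ) (hk : 1 ≤ k)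
    (p : ℝ) (hp : 0 < p)
    (g : ℝ → ℕ → ℝ)
    (hg : ∀ q : ℝ, ∀ j : ℕ,
      g q j = q ^ (k - j) * f j / ∑ l ∈ Finset.range k, q ^ (k - l) * f l)
    (E : ℝ → ℝ) (hE : ∀ q : ℝ, E q = ∑ j ∈ Finset.range k, (j : ℝ) * g q j)
    (V : ℝ → ℝ)
    (hV : ∀ q : ℝ,
      V q = ∑ j ∈ Finset.range k, (j : ℝ) ^ 2 * g q j - (E q) ^ 2) :
    HasDerivAt E (-(1 / p) * V p) p := by
  set A : ℝ → ℝ := fun q => ∑ l ∈ Finset.range k, q ^ (k - l) * f l with hA_def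
  set B : ℝ → ℝ := fun q => ∑ l ∈ Finset.range k, (l : ℝ) * (q ^ (k - l) * f l) with hB_def
  set C : ℝ → ℝ := fun q => ∑ l ∈ Finset.range k, (l : ℝ) ^ 2 * (q ^ (k - l) * f l) with hC_def
  have hApos : 0 < A p := by
    apply Finset.sum_pos
    · intro l _
      exact mul_pos (pow_pos hp _) (hf l)
    · exact Finset.nonempty_range_iff.mpr (by omega)
  have hAne : A p ≠ 0 := ne_of_gt hApos
  have hEeq : E = fun q => B q / A q := by
    funext q
    rw [hE]
    show _ = (∑ l ∈ Finset.range k, (l : ℝ) * (q ^ (k - l) * f l)) / _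
    rw [Finset.sum_div]
    refine Finset.sum_congr rfl fun j _ => ?_
    rw [hg]
    show (j : ℝ) * (q ^ (k - j) * f j / A q) = (j : ℝ) * (q ^ (k - j) * f j) / A q
    ring
  set A' : ℝ := ∑ l ∈ Finset.range k, ((k - l : ℕ) : ℝ) * p ^ (k - l - 1) * f l with hA'_def
  set B' : ℝ := ∑ l ∈ Finset.range k,
      (l : ℝ) * (((k - l : ℕ) : ℝ) * p ^ (k - l - 1) * f l) with hB'_def
  have hA' : HasDerivAt A A' p := by
    apply HasDerivAt.fun_sum
    intro l _
    simpa using (hasDerivAt_pow (k - l) p).mul_const (f l)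
  have hB' : HasDerivAt B B' p := by
    apply HasDerivAt.fun_sum
    intro l _
    simpa using ((hasDerivAt_pow (k - l) p).mul_const (f l)).const_mul (l : ℝ)
  have key : ∀ l ∈ Finset.range k,
      p * (((k - l : ℕ) : ℝ) * p ^ (k - l - 1) * f l)
        = (k : ℝ) * (p ^ (k - l) * f l) - (l : ℝ) * (p ^ (k - l) * f l) := by
    intro l hl
    have hlk : l < k := Finset.mem_range.mp hl
    have h1 : k - l - 1 + 1 = k - l := by omega
    have h2 : p ^ (k - l) = p ^ (k - l - 1) * p := by rw [← pow_succ, h1]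
    rw [Nat.cast_sub hlk.le, h2]; ring
  have key1 : A' = ((k : ℝ) * A p - B p) / p := by
    rw [eq_div_iff (ne_of_gt hp), hA'_def]
    rw [Finset.sum_mul]
    show _ = (k : ℝ) * (∑ l ∈ Finset.range k, p ^ (k - l) * f l)
        - ∑ l ∈ Finset.range k, (l : ℝ) * (p ^ (k - l) * f l)
    rw [Finset.mul_sum, ← Finset.sum_sub_distrib]
    refine Finset.sum_congr rfl fun l hl => ?_
    rw [mul_comm]; exact key l hl
  have key2 : B' = ((k : ℝ) * B p - C p) / p := by
    rw [eq_div_iff (ne_of_gt hp), hB'_def]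
    rw [Finset.sum_mul]
    show _ = (k : ℝ) * (∑ l ∈ Finset.range k, (l : ℝ) * (p ^ (k - l) * f l))
        - ∑ l ∈ Finset.range k, (l : ℝ) ^ 2 * (p ^ (k - l) * f l)
    rw [Finset.mul_sum, ← Finset.sum_sub_distrib]
    refine Finset.sum_congr rfl fun l hl => ?_
    have := key l hl
    calc (l : ℝ) * (((k - l : ℕ) : ℝ) * p ^ (k - l - 1) * f l) * p
        = (l : ℝ) * (p * (((k - l : ℕ) : ℝ) * p ^ (k - l - 1) * f l)) := by ring
      _ = _ := by rw [this]; ring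
  have hVeq : V p = C p / A p - (B p / A p) ^ 2 := by
    rw [hV]
    congr 1
    · show _ = (∑ l ∈ Finset.range k, (l : ℝ) ^ 2 * (p ^ (k - l) * f l)) / _
      rw [Finset.sum_div]
      refine Finset.sum_congr rfl fun j _ => ?_
      rw [hg]
      show (j : ℝ) ^ 2 * (p ^ (k - j) * f j / A p) = (j : ℝ) ^ 2 * (p ^ (k - j) * f j) / A p
      ring
    · rw [hEeq]
  have hder : HasDerivAt E ((B' * A p - B p * A') / A p ^ 2) p := by
    rw [hEeq]
    exact hB'.div hA' hAne
  convert hder using 1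
  rw [hVeq, key1, key2]
  field_simp
  ring
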